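/- Let ψ ∈ L²(ℝⁿ) be a normalized state in the domain of a symmetric operator A. Then over all real-valued Borel measurable functions f : ℝⁿ → ℝ with fψ ∈ L², the quantity ‖(A − f(X))ψ‖² is minimized by f(x) = Re(conj(ψ(x))·(Aψ)(x))/|ψ(x)|² on the set {ψ ≠ 0} (and 0 elsewhere), and any two minimizers agree a.e. on {ψ ≠ 0}. -/

import Mathlib

open MeasureTheory Complex

private lemma key_id (a p : ℂ) (r s : ℝ)
    (hs : s = if p ≠ 0 then ((starRingEnd ℂ) p * a).re / ‖p‖ ^ 2 else 0) :
    ‖a - (r:ℂ)*p‖^2 = ‖a - (s:ℂ)*p‖^2 + (r - s)^2 * ‖p‖^2 := by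
  by_cases hp : p = 0
  · subst hp; simp [hs]
  · rw [if_pos hp] at hs
    have hc : p.re^2 + p.im^2 ≠ 0 := by
      have := Complex.normSq_pos.mpr hp
      simp [Complex.normSq_apply] at this
      nlinarith
    have hn : ‖p‖^2 = p.re^2 + p.im^2 := by
      rw [Complex.sq_norm, Complex.normSq_apply]; ring
    rw [hn] at hs
    have hb : ((starRingEnd ℂ) p * a).re = p.re * a.re + p.im * a.im := by
      simp [Complex.mul_re]
    rw [hb] at hs
    simp only [Complex.sq_norm, Complex.normSq_apply, Complex.sub_re,
      Complex.sub_im, Complex.mul_re, Complex.mul_im, Complex.ofReal_re, Complex.ofReal_im, hn]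
    rw [hs]
    field_simp
    ring

private lemma key_bound (a p : ℂ) (s : ℝ)
    (hs : s = if p ≠ 0 then ((starRingEnd ℂ) p * a).re / ‖p‖ ^ 2 else 0) :
    ‖(s:ℂ) * p‖ ≤ ‖a‖ := by
  by_cases hp : p = 0
  · simp [hp]
  · rw [if_pos hp] at hs
    have hpn : (0:ℝ) < ‖p‖ := norm_pos_iff.mpr hp
    have hb : |((starRingEnd ℂ) p * a).re| ≤ ‖p‖ * ‖a‖ := by
      calc |((starRingEnd ℂ) p * a).re| ≤ ‖(starRingEnd ℂ) p * a‖ := Complex.abs_re_le_norm _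
        _ = ‖p‖ * ‖a‖ := by rw [norm_mul, RCLike.norm_conj]
    rw [norm_mul, Complex.norm_real, Real.norm_eq_abs, hs, abs_div,
      _root_.abs_of_nonneg (by positivity : (0:ℝ) ≤ ‖p‖^2)]
    rw [div_mul_eq_mul_div, div_le_iff₀ (by positivity)]
    calc |((starRingEnd ℂ) p * a).re| * ‖p‖ ≤ (‖p‖*‖a‖) * ‖p‖ := by nlinarith
      _ = ‖a‖ * ‖p‖^2 := by ring

private lemma key_integrable {n : ℕ} (ψ Aψ : (Fin n → ℝ) → ℂ)
    (hAψ : MemLp Aψ 2 (volume : Measure (Fin n → ℝ)))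
    (f : (Fin n → ℝ) → ℝ)
    (hfψ : MemLp (fun x => (f x : ℂ) * ψ x) 2 (volume : Measure (Fin n → ℝ))) :
    Integrable (fun x => ‖Aψ x - (f x : ℂ) * ψ x‖ ^ 2) (volume : Measure (Fin n → ℝ)) := by
  have h2 : MemLp (fun x => Aψ x - (f x : ℂ) * ψ x) 2 (volume : Measure (Fin n → ℝ)) :=
    hAψ.sub hfψ
  exact h2.norm.integrable_sq.congr (Filter.Eventually.of_forall fun x => by simp [sq])

/-- the conditional expectation of a symmetric operator `A` (given via `Aψ = A ψ`)
with respect to the position operator `X` on `L²(ℝⁿ)` is the minimizer of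
`‖(A - f(X))ψ‖²` over real-valued Borel `f` with `fψ ∈ L²`, given by
`f₀(x) = Re(conj(ψ x) · (Aψ)(x)) / |ψ x|²` on `{ψ ≠ 0}` and `0` elsewhere;
any two minimizers agree a.e. on `{ψ ≠ 0}`. -/
theorem stmt_0 {n : ℕ} (ψ Aψ : (Fin n → ℝ) → ℂ)
    (hψmeas : Measurable ψ) (hAψmeas : Measurable Aψ)
    (hψ : MemLp ψ 2 (volume : Measure (Fin n → ℝ)))
    (hAψ : MemLp Aψ 2 (volume : Measure (Fin n → ℝ)))
    (hnorm : ∫ x, ‖ψ x‖ ^ 2 = 1)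
    (f₀ : (Fin n → ℝ) → ℝ)
    (hf₀ : ∀ x, f₀ x =
      if ψ x ≠ 0 then ((starRingEnd ℂ) (ψ x) * Aψ x).re / ‖ψ x‖ ^ 2 else 0) :
    (Measurable f₀ ∧
      MemLp (fun x => (f₀ x : ℂ) * ψ x) 2 (volume : Measure (Fin n → ℝ)) ∧
      ∀ f : (Fin n → ℝ) → ℝ, Measurable f →
        MemLp (fun x => (f x : ℂ) * ψ x) 2 (volume : Measure (Fin n → ℝ)) →
        ∫ x, ‖Aψ x - (f₀ x : ℂ) * ψ x‖ ^ 2 ≤ ∫ x, ‖Aψ x - (f x : ℂ) * ψ x‖ ^ 2) ∧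
    (∀ f g : (Fin n → ℝ) → ℝ, Measurable f → Measurable g →
      MemLp (fun x => (f x : ℂ) * ψ x) 2 (volume : Measure (Fin n → ℝ)) →
      MemLp (fun x => (g x : ℂ) * ψ x) 2 (volume : Measure (Fin n → ℝ)) →
      (∀ h : (Fin n → ℝ) → ℝ, Measurable h →
        MemLp (fun x => (h x : ℂ) * ψ x) 2 (volume : Measure (Fin n → ℝ)) →
        ∫ x, ‖Aψ x - (f x : ℂ) * ψ x‖ ^ 2 ≤ ∫ x, ‖Aψ x - (h x : ℂ) * ψ x‖ ^ 2) →
      (∀ h : (Fin n → ℝ) → ℝ, Measurable h →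
        MemLp (fun x => (h x : ℂ) * ψ x) 2 (volume : Measure (Fin n → ℝ)) →
        ∫ x, ‖Aψ x - (g x : ℂ) * ψ x‖ ^ 2 ≤ ∫ x, ‖Aψ x - (h x : ℂ) * ψ x‖ ^ 2) →
      ∀ᵐ x ∂(volume : Measure (Fin n → ℝ)), ψ x ≠ 0 → f x = g x) := by
  -- measurability of f₀
  have hf₀eq : f₀ = fun x => if ψ x ≠ 0 then ((starRingEnd ℂ) (ψ x) * Aψ x).re / ‖ψ x‖ ^ 2 else 0 :=
    funext hf₀
  have hf₀meas : Measurable f₀ := by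
    rw [hf₀eq]
    apply Measurable.ite
    · exact (hψmeas (measurableSet_singleton 0)).compl
    · fun_prop
    · exact measurable_const
  -- f₀ ψ is in L²
  have hf₀ψmeas : Measurable (fun x => (f₀ x : ℂ) * ψ x) :=
    (Complex.measurable_ofReal.comp hf₀meas).mul hψmeas
  have hf₀ψ : MemLp (fun x => (f₀ x : ℂ) * ψ x) 2 (volume : Measure (Fin n → ℝ)) := by
    apply MemLp.of_le hAψ hf₀ψmeas.aestronglyMeasurable
    exact Filter.Eventually.of_forall fun x => key_bound (Aψ x) (ψ x) (f₀ x) (hf₀ x)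
  -- minimality
  have hMin : ∀ f : (Fin n → ℝ) → ℝ, Measurable f →
      MemLp (fun x => (f x : ℂ) * ψ x) 2 (volume : Measure (Fin n → ℝ)) →
      ∫ x, ‖Aψ x - (f₀ x : ℂ) * ψ x‖ ^ 2 ≤ ∫ x, ‖Aψ x - (f x : ℂ) * ψ x‖ ^ 2 := by
    intro f hf hfψ
    apply integral_mono (key_integrable ψ Aψ hAψ f₀ hf₀ψ) (key_integrable ψ Aψ hAψ f hfψ)
    intro x
    dsimp only
    rw [key_id (Aψ x) (ψ x) (f x) (f₀ x) (hf₀ x)]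
    have : (0:ℝ) ≤ (f x - f₀ x)^2 * ‖ψ x‖^2 := by positivity
    linarith
  refine ⟨⟨hf₀meas, hf₀ψ, hMin⟩, ?_⟩
  -- uniqueness
  have hKey : ∀ f : (Fin n → ℝ) → ℝ, Measurable f →
      MemLp (fun x => (f x : ℂ) * ψ x) 2 (volume : Measure (Fin n → ℝ)) →
      (∀ h : (Fin n → ℝ) → ℝ, Measurable h →
        MemLp (fun x => (h x : ℂ) * ψ x) 2 (volume : Measure (Fin n → ℝ)) →
        ∫ x, ‖Aψ x - (f x : ℂ) * ψ x‖ ^ 2 ≤ ∫ x, ‖Aψ x - (h x : ℂ) * ψ x‖ ^ 2) →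
      ∀ᵐ x ∂(volume : Measure (Fin n → ℝ)), ψ x ≠ 0 → f x = f₀ x := by
    intro f hf hfψ hfmin
    have h1 : ∫ x, ‖Aψ x - (f x : ℂ) * ψ x‖ ^ 2 = ∫ x, ‖Aψ x - (f₀ x : ℂ) * ψ x‖ ^ 2 :=
      le_antisymm (hfmin f₀ hf₀meas hf₀ψ) (hMin f hf hfψ)
    set D : (Fin n → ℝ) → ℝ := fun x => (f x - f₀ x)^2 * ‖ψ x‖^2 with hD
    have hDeq : ∀ x, D x = ‖Aψ x - (f x : ℂ) * ψ x‖ ^ 2 - ‖Aψ x - (f₀ x : ℂ) * ψ x‖ ^ 2 := by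
      intro x
      rw [key_id (Aψ x) (ψ x) (f x) (f₀ x) (hf₀ x)]
      ring
    have hDint : Integrable D (volume : Measure (Fin n → ℝ)) := by
      apply Integrable.congr
        ((key_integrable ψ Aψ hAψ f hfψ).sub (key_integrable ψ Aψ hAψ f₀ hf₀ψ))
      exact Filter.Eventually.of_forall fun x => (hDeq x).symm
    have hDzero : ∫ x, D x = 0 := by
      have : ∫ x, D x = (∫ x, ‖Aψ x - (f x : ℂ) * ψ x‖ ^ 2) -
          ∫ x, ‖Aψ x - (f₀ x : ℂ) * ψ x‖ ^ 2 := by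
        rw [← integral_sub (key_integrable ψ Aψ hAψ f hfψ) (key_integrable ψ Aψ hAψ f₀ hf₀ψ)]
        exact integral_congr_ae (Filter.Eventually.of_forall hDeq)
      rw [this, h1, sub_self]
    have hDae : D =ᵐ[volume] 0 :=
      (integral_eq_zero_iff_of_nonneg (fun x => by positivity) hDint).mp hDzero
    filter_upwards [hDae] with x hx hψx
    have hψn : ‖ψ x‖^2 ≠ 0 := pow_ne_zero _ (norm_ne_zero_iff.mpr hψx)
    have : (f x - f₀ x)^2 = 0 := by
      have hx0 : (f x - f₀ x)^2 * ‖ψ x‖^2 = 0 := hx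
      exact (mul_eq_zero.mp hx0).resolve_right hψn
    have := pow_eq_zero_iff (n := 2) (by norm_num) |>.mp this
    linarith
  intro f g hfm hgm hfψ hgψ hfmin hgmin
  filter_upwards [hKey f hfm hfψ hfmin, hKey g hgm hgψ hgmin] with x h1 h2 hψx
  rw [h1 hψx, h2 hψx]
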